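/- arXiv:2312.03529 — 2 statements merged into one kernel-verified Lean document; each statement's English description precedes it below -/
import Mathlib

section
/- The quotient space of the free sum of two copies of the Michael line obtained by identifying corresponding rational points does not have a Gδ-diagonal; in particular, it is not submetrizable. -/
open Topology Filter


def Submetrizable (X : Type*) [t : TopologicalSpace X] : Prop :=
  ∃ σ : TopologicalSpace X, t ≤ σ ∧ @TopologicalSpace.MetrizableSpace X σ

/-- The topology of the Michael line: generated by the Euclidean open sets together with all
sets of irrational numbers. -/
def michaelTopology : TopologicalSpace ℝ :=
  TopologicalSpace.generateFrom
    ({U : Set ℝ | IsOpen U} ∪ {K : Set ℝ | ∀ x ∈ K, Irrational x})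

/-- The free sum of two copies of the Michael line, as `Bool × ℝ` with the product of the
discrete topology and the Michael topology. -/
def twoMichael : TopologicalSpace (Bool × ℝ) :=
  @instTopologicalSpaceProd Bool ℝ ⊥ michaelTopology

/-- The identification of the two copies of each rational point. -/
def michaelRel : Bool × ℝ → Bool × ℝ → Prop :=
  fun a b => a.2 = b.2 ∧ ∃ q : ℚ, a.2 = (q : ℝ)

/-- The quotient of the free sum of two Michael lines identifying corresponding rationals. -/
def PopovSpace : Type := Quot michaelRel

/-- Its quotient topology. -/
def popovTopology : TopologicalSpace PopovSpace :=
  twoMichael.coinduced (Quot.mk michaelRel)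



lemma michael_eqvGen {a b : Bool × ℝ} (h : Relation.EqvGen michaelRel a b) :
    a = b ∨ (a.2 = b.2 ∧ ∃ q : ℚ, a.2 = (q : ℝ)) := by
  induction h with
  | rel x y h => exact Or.inr ⟨h.1, h.2⟩
  | refl x => exact Or.inl rfl
  | symm x y _ ih =>
    rcases ih with rfl | ⟨h1, q, hq⟩
    · exact Or.inl rfl
    · exact Or.inr ⟨h1.symm, q, h1 ▸ hq⟩
  | trans x y z _ _ ih1 ih2 =>
    rcases ih1 with rfl | ⟨h1, q, hq⟩
    · exact ih2
    · rcases ih2 with rfl | ⟨h2, _⟩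
      · exact Or.inr ⟨h1, q, hq⟩
      · exact Or.inr ⟨h1.trans h2, q, hq⟩

lemma popov_ne {x : ℝ} (hx : Irrational x) :
    Quot.mk michaelRel (false, x) ≠ Quot.mk michaelRel (true, x) := by
  intro h
  rcases michael_eqvGen ((Quot.eq.1 h)) with h' | ⟨_, q, hq⟩
  · simp at h'
  · exact hx ⟨q, hq.symm⟩

/-- at a rational point, the euclidean nhds filter is ≤ the Michael nhds filter -/
lemma michael_nhds_rat (q : ℚ) :
    (𝓝 (q : ℝ)) ≤ @nhds ℝ michaelTopology (q : ℝ) := by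
  rw [michaelTopology, TopologicalSpace.nhds_generateFrom]
  refine le_iInf fun s => le_iInf fun hs => ?_
  rcases hs.2 with hU | hK
  · exact Filter.le_principal_iff.2 (IsOpen.mem_nhds (hU : IsOpen s) hs.1)
  · exact absurd (hK _ hs.1) (by simp [Rat.not_irrational])

noncomputable def popovMap (b : Bool) : ℝ → PopovSpace :=
  fun x => Quot.mk michaelRel (b, x)

lemma popovMap_tendsto (b : Bool) (q : ℚ) :
    Filter.Tendsto (popovMap b) (𝓝 (q : ℝ))
      (@nhds PopovSpace popovTopology (popovMap b q)) := by
  have h1 : Filter.Tendsto (fun x : ℝ => (b, x)) (𝓝 (q : ℝ))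
      (@nhds (Bool × ℝ) twoMichael (b, (q : ℝ))) := by
    rw [twoMichael, @nhds_prod_eq Bool ℝ ⊥ michaelTopology]
    exact Filter.Tendsto.prodMk (tendsto_const_nhds : Filter.Tendsto _ (𝓝 (q:ℝ)) (@nhds Bool ⊥ b))
      (michael_nhds_rat q)
  have h2 : @Continuous _ _ twoMichael popovTopology (Quot.mk michaelRel) := by
    rw [popovTopology]
    exact @continuous_coinduced_rng _ _ (Quot.mk michaelRel) twoMichael
  exact Filter.Tendsto.comp (@Continuous.tendsto _ _ twoMichael popovTopology _ h2 (b, (q:ℝ))) h1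

theorem popovSpace_no_gdelta_diagonal' :
    ¬ @IsGδ (PopovSpace × PopovSpace)
        (@instTopologicalSpaceProd PopovSpace PopovSpace popovTopology popovTopology)
        (Set.diagonal PopovSpace) := by
  letI : TopologicalSpace PopovSpace := popovTopology
  intro hGδ
  obtain ⟨f, hfo, hfe⟩ := isGδ_iff_eq_iInter_nat.1 hGδ
  set g : ℝ → PopovSpace × PopovSpace :=
    fun x => (Quot.mk michaelRel (false, x), Quot.mk michaelRel (true, x)) with hg
  have hq : ∀ (q : ℚ) (n : ℕ), (q : ℝ) ∈ interior (g ⁻¹' f n) := by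
    intro q n
    have hgq : g q ∈ f n := by
      have : g q ∈ Set.diagonal PopovSpace := by
        simp only [hg, Set.mem_diagonal_iff]
        exact Quot.sound ⟨rfl, q, rfl⟩
      rw [hfe] at this
      exact Set.mem_iInter.1 this n
    have htend : Filter.Tendsto g (𝓝 (q : ℝ)) (𝓝 (g q)) := by
      rw [show g q = (popovMap false q, popovMap true q) from rfl, nhds_prod_eq]
      exact (popovMap_tendsto false q).prodMk (popovMap_tendsto true q)
    exact mem_interior_iff_mem_nhds.2 (htend ((hfo n).mem_nhds hgq))
  have hdense : ∀ n, Dense (interior (g ⁻¹' f n)) := by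
    intro n
    refine Rat.denseRange_cast.mono ?_
    rintro x ⟨q, rfl⟩
    exact hq q n
  have hD : Dense ({x : ℝ | Irrational x} ∩ ⋂ n, interior (g ⁻¹' f n)) := by
    refine Dense.inter_of_Gδ .setOf_irrational
      (IsGδ.iInter fun n => isOpen_interior.isGδ) dense_irrational
      (dense_iInter_of_isOpen (fun n => isOpen_interior) hdense)
  obtain ⟨x, hxI, hxA⟩ := hD.nonempty
  have : g x ∈ Set.diagonal PopovSpace := by
    rw [hfe, Set.mem_iInter]
    intro n
    exact (interior_subset (Set.mem_iInter.1 hxA n) : x ∈ g ⁻¹' f n)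
  exact popov_ne hxI this

lemma isGδ_of_le {X : Type*} {t σ : TopologicalSpace X} (h : t ≤ σ) {s : Set X}
    (hs : @IsGδ X σ s) : @IsGδ X t s := by
  obtain ⟨T, hT, hTc, rfl⟩ := hs
  exact ⟨T, fun u hu => (hT u hu).mono h, hTc, rfl⟩

/-- The quotient of two copies of the Michael line identifying corresponding rational points
does not have a Gδ-diagonal; in particular it is not submetrizable. -/
theorem popovSpace_no_gdelta_diagonal :
    ¬ @IsGδ (PopovSpace × PopovSpace)
        (@instTopologicalSpaceProd PopovSpace PopovSpace popovTopology popovTopology)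
        (Set.diagonal PopovSpace) ∧
    ¬ @Submetrizable PopovSpace popovTopology := by
  refine ⟨popovSpace_no_gdelta_diagonal', ?_⟩
  rintro ⟨σ, hle, hmet⟩
  apply popovSpace_no_gdelta_diagonal'
  letI := σ
  letI : MetricSpace PopovSpace := @TopologicalSpace.metrizableSpaceMetric _ σ hmet
  have hGδσ : @IsGδ (PopovSpace × PopovSpace)
      (@instTopologicalSpaceProd PopovSpace PopovSpace σ σ)
      (Set.diagonal PopovSpace) := isClosed_diagonal.isGδ
  refine isGδ_of_le ?_ hGδσ
  exact inf_le_inf (induced_mono hle) (induced_mono hle)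
end

section
/- If f : X → Y is a closed continuous surjection and 𝔇 is a discrete family of subsets of X, then {f[D] : D ∈ 𝔇} is a hereditarily closure-preserving family in Y. -/
universe u v

/-- A family of subsets is discrete if every point has a neighbourhood meeting at most one
member of the family. -/
def DiscreteFamily {X : Type u} [TopologicalSpace X] (𝔇 : Set (Set X)) : Prop :=
  ∀ x : X, ∃ V ∈ nhds x, {D ∈ 𝔇 | (D ∩ V).Nonempty}.Subsingleton

/-- A family `𝔉` is hereditarily closure-preserving if for every subfamily and every choice of
subsets of its members, the closure of the union is the union of the closures. -/
def HCP {Y : Type v} [TopologicalSpace Y] (𝔉 : Set (Set Y)) : Prop :=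
  ∀ G ⊆ 𝔉, ∀ B : Set Y → Set Y, (∀ F ∈ G, B F ⊆ F) →
    closure (⋃ F ∈ G, B F) = ⋃ F ∈ G, closure (B F)

/-- Closed continuous surjections send discrete families to hereditarily closure-preserving
families. -/
theorem hcp_image_of_discreteFamily {X : Type u} {Y : Type v}
    [TopologicalSpace X] [TopologicalSpace Y]
    (f : X → Y) (hf : Continuous f) (hsurj : Function.Surjective f)
    (hclosed : IsClosedMap f)
    (𝔇 : Set (Set X)) (hdisc : DiscreteFamily 𝔇) :
    HCP {S : Set Y | ∃ D ∈ 𝔇, S = f '' D} := by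
  classical
  intro G hG B hB
  apply Set.Subset.antisymm
  · -- choose witnesses
    set D : Set Y → Set X := fun F => if h : F ∈ G then (hG h).choose else ∅ with hDdef
    have hD𝔇 : ∀ F ∈ G, D F ∈ 𝔇 := by
      intro F hF
      simp only [hDdef, dif_pos hF]
      exact (hG hF).choose_spec.1
    have hDim : ∀ F ∈ G, F = f '' (D F) := by
      intro F hF
      simp only [hDdef, dif_pos hF]
      exact (hG hF).choose_spec.2
    set A : Set Y → Set X := fun F => D F ∩ f ⁻¹' (B F) with hAdef
    have hAD : ∀ F, A F ⊆ D F := fun F => Set.inter_subset_left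
    have hAim : ∀ F ∈ G, f '' (A F) = B F := by
      intro F hF
      apply Set.Subset.antisymm
      · rintro y ⟨x, ⟨hx1, hx2⟩, rfl⟩
        exact hx2
      · intro y hy
        have : y ∈ f '' (D F) := (hDim F hF) ▸ hB F hF hy
        obtain ⟨x, hx, rfl⟩ := this
        exact ⟨x, ⟨hx, hy⟩, rfl⟩
    have claim : closure (⋃ F ∈ G, A F) ⊆ ⋃ F ∈ G, closure (A F) := by
      intro x hx
      obtain ⟨V, hV, hsub⟩ := hdisc x
      have hmem : ∀ t ∈ nhds x, (t ∩ ⋃ F ∈ G, A F).Nonempty :=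
        fun t ht => mem_closure_iff_nhds.mp hx t ht
      obtain ⟨z, hzV, hzU⟩ := hmem V hV
      simp only [Set.mem_iUnion] at hzU
      obtain ⟨F0, hF0, hzA⟩ := hzU
      refine Set.mem_iUnion₂.mpr ⟨F0, hF0, ?_⟩
      rw [mem_closure_iff_nhds]
      intro t ht
      obtain ⟨w, ⟨hwt, hwV⟩, hwU⟩ := hmem (t ∩ V) (Filter.inter_mem ht hV)
      simp only [Set.mem_iUnion] at hwU
      obtain ⟨F1, hF1, hwA⟩ := hwU
      have hD0 : D F0 ∈ {Dd ∈ 𝔇 | (Dd ∩ V).Nonempty} :=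
        ⟨hD𝔇 F0 hF0, ⟨z, hAD F0 hzA, hzV⟩⟩
      have hD1 : D F1 ∈ {Dd ∈ 𝔇 | (Dd ∩ V).Nonempty} :=
        ⟨hD𝔇 F1 hF1, ⟨w, hAD F1 hwA, hwV⟩⟩
      have hDeq : D F1 = D F0 := hsub hD1 hD0
      have hFeq : F1 = F0 := by rw [hDim F1 hF1, hDim F0 hF0, hDeq]
      exact ⟨w, hwt, hFeq ▸ hwA⟩
    have himU : f '' (⋃ F ∈ G, A F) = ⋃ F ∈ G, B F := by
      rw [Set.image_iUnion₂]
      exact Set.iUnion₂_congr hAim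
    calc closure (⋃ F ∈ G, B F) = closure (f '' (⋃ F ∈ G, A F)) := by rw [himU]
      _ ⊆ f '' closure (⋃ F ∈ G, A F) := hclosed.closure_image_subset _
      _ ⊆ f '' (⋃ F ∈ G, closure (A F)) := Set.image_mono claim
      _ = ⋃ F ∈ G, f '' closure (A F) := Set.image_iUnion₂ _ _
      _ ⊆ ⋃ F ∈ G, closure (f '' (A F)) :=
          Set.iUnion₂_mono fun F hF => image_closure_subset_closure_image hf
      _ = ⋃ F ∈ G, closure (B F) := by
          refine Set.iUnion₂_congr fun F hF => by rw [hAim F hF]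
  · exact Set.iUnion₂_subset fun F hF =>
      closure_mono (Set.subset_iUnion₂ (s := fun F _ => B F) F hF)
end
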